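/- Let p be a prime with p ≡ 1 (mod 4), t, b positive integers with t² + 4 = b²p, and 𝓛 the associated companion Lucas sequence. Then the period of the sequence 𝓛 modulo p² divides p(p − 1); that is, for all integers m and n with m ≡ n (mod p(p − 1)), one has 𝓛_m ≡ 𝓛_n (mod p²). -/

import Mathlib

open Polynomial

lemma aux_pow_succ_sq_zero {A : Type*} [CommRing A] (c x : A) (hx : x ^ 2 = 0) :
    ∀ n : ℕ, (c + x) ^ (n + 1) = c ^ (n + 1) + ((n : A) + 1) * (c ^ n * x) := by
  intro n
  induction n with
  | zero => ring
  | succ n ih =>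
    have h1 : (c + x) ^ (n + 1 + 1) = (c + x) ^ (n + 1) * (c + x) := by ring
    rw [h1, ih]
    push_cast
    linear_combination (((n : A) + 1) * c ^ n) * hx

lemma aux_unit_zpow_sq_zero {A : Type*} [CommRing A] (u : Aˣ) (x : A)
    (hx : x ^ 2 = 0) (hu : (u : A) = 1 + x) :
    ∀ q : ℤ, ((u ^ q : Aˣ) : A) = 1 + (q : A) * x := by
  have hinv : ((u⁻¹ : Aˣ) : A) = 1 - x := by
    apply Units.inv_eq_of_mul_eq_one_right
    rw [hu]; linear_combination -hx
  intro q
  induction q using Int.induction_on with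
  | zero => simp
  | succ n ih =>
    have h1 : u ^ ((n : ℤ) + 1) = u ^ (n : ℤ) * u := by rw [zpow_add_one]
    rw [h1, Units.val_mul, ih, hu]
    push_cast
    linear_combination (n : A) * hx
  | pred n ih =>
    have h1 : u ^ (-(n : ℤ) - 1) = u ^ (-(n : ℤ)) * u⁻¹ := by rw [zpow_sub_one]
    rw [h1, Units.val_mul, ih, hinv]
    push_cast
    linear_combination ((n : A)) * hx

lemma aux_pow_prime_expand {A : Type*} [CommRing A] {p : ℕ} (hp : p.Prime) (hp5 : 5 ≤ p)
    (c x e : A) (hx2 : x ^ 2 = e) (he : e ^ 2 = 0) (hpe : (p : A) * e = 0) :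
    (c + x) ^ p = c ^ p + (p : A) * (c ^ (p - 1) * x) := by
  obtain ⟨P, hP⟩ : ∃ P, p = P + 3 := ⟨p - 3, by omega⟩
  have hx4 : x ^ 4 = 0 := by
    have : x ^ 4 = (x ^ 2) ^ 2 := by ring
    rw [this, hx2, he]
  rw [add_comm c x, add_pow]
  have hsplit : ∑ m ∈ Finset.range (p + 1), x ^ m * c ^ (p - m) * (p.choose m : A)
      = (∑ i ∈ Finset.range (P + 2), x ^ (i + 2) * c ^ (p - (i + 2)) * (p.choose (i + 2) : A))
        + x ^ 1 * c ^ (p - 1) * (p.choose 1 : A)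
        + x ^ 0 * c ^ (p - 0) * (p.choose 0 : A) := by
    rw [show p + 1 = (P + 3) + 1 by omega]
    rw [Finset.sum_range_succ' (fun m => x ^ m * c ^ (p - m) * (p.choose m : A)) (P + 3)]
    rw [Finset.sum_range_succ' (fun m => x ^ (m + 1) * c ^ (p - (m + 1)) * (p.choose (m + 1) : A)) (P + 2)]
  rw [hsplit]
  have hzero : ∑ i ∈ Finset.range (P + 2), x ^ (i + 2) * c ^ (p - (i + 2)) * (p.choose (i + 2) : A) = 0 := by
    apply Finset.sum_eq_zero
    intro i _
    by_cases hi : 2 ≤ i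
    · have : x ^ (i + 2) = x ^ 4 * x ^ (i - 2) := by
        rw [← pow_add]; congr 1; omega
      rw [this, hx4, zero_mul, zero_mul, zero_mul]
    · obtain ⟨d, hd⟩ := Nat.Prime.dvd_choose_self hp (by omega : i + 2 ≠ 0)
        (by omega : i + 2 < p)
      have hxi : x ^ (i + 2) = e * x ^ i := by
        rw [show i + 2 = 2 + i by omega, pow_add, hx2]
      rw [hd, hxi]
      push_cast
      linear_combination (x ^ i * c ^ (p - (i + 2)) * (d : A)) * hpe
  rw [hzero]
  simp [Nat.choose_one_right]
  ring

set_option maxHeartbeats 1000000 in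
theorem stmt_7 (p : ℕ) (hp : p.Prime) (hp4 : p % 4 = 1)
    (t b : ℤ) (ht : 0 < t) (hb : 0 < b)
    (hpt : t ^ 2 + 4 = b ^ 2 * (p : ℤ))
    (L : ℤ → ℤ) (hL0 : L 0 = 2) (hL1 : L 1 = t)
    (hL : ∀ k : ℤ, L (k + 2) = t * L (k + 1) + L k) :
    ∀ m n : ℤ, m ≡ n [ZMOD (p : ℤ) * ((p : ℤ) - 1)] →
      L m ≡ L n [ZMOD (p : ℤ) ^ 2] := by
  have hp5 : 5 ≤ p := by have := hp.two_le; omega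
  obtain ⟨K, hK⟩ : ∃ K, p = 4 * K + 1 := ⟨p / 4, by omega⟩
  have hK1 : 1 ≤ K := by omega
  -- the base ring and the quadratic extension
  set R := ZMod (p ^ 2) with hRdef
  set g : R[X] := X ^ 2 - C ((t : ℤ) : R) * X - C 1 with hgdef
  set A := AdjoinRoot g with hAdef
  set α : A := AdjoinRoot.root g with hαdef
  -- the fundamental relation
  have hrel : α ^ 2 = (t : A) * α + 1 := by
    have h0 : (aeval α) g = 0 := by
      rw [hαdef, AdjoinRoot.aeval_eq, AdjoinRoot.mk_self]
    simp only [hgdef, map_sub, map_pow, map_mul, map_one, aeval_X, aeval_C] at h0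
    have hcast : (algebraMap R A) ((t : ℤ) : R) = (t : A) := map_intCast _ t
    rw [hcast] at h0
    linear_combination h0
  -- g is monic of degree 2
  haveI : Fact (1 < p ^ 2) := ⟨by nlinarith⟩
  have hg2 : g = X ^ 2 - (C ((t : ℤ) : R) * X + C 1) := by rw [hgdef]; ring
  have hdlt : (C ((t : ℤ) : R) * X + C 1).degree < ((2 : ℕ) : WithBot ℕ) := by
    refine lt_of_le_of_lt (Polynomial.degree_linear_le) ?_
    norm_num
  have hmonic : g.Monic := by
    rw [hg2]; exact Polynomial.monic_X_pow_sub hdlt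
  have hgdeg : g.natDegree = 2 := by
    have : g.degree = 2 := by
      rw [hg2, Polynomial.degree_sub_eq_left_of_degree_lt]
      · exact Polynomial.degree_X_pow 2
      · rw [Polynomial.degree_X_pow]; exact hdlt
    exact Polynomial.natDegree_eq_of_degree_eq_some this
  -- injectivity of R → A
  have hinj : Function.Injective (algebraMap R A) := by
    intro r s hrs
    by_contra hne
    have h1 : AdjoinRoot.mk g (C (r - s)) = 0 := by
      have h2 : AdjoinRoot.mk g (C (r - s)) = algebraMap R A (r - s) := by
        rw [AdjoinRoot.algebraMap_eq]; rfl
      rw [h2, map_sub, hrs, sub_self]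
    have hC : C (r - s) ≠ (0 : R[X]) := fun h =>
      hne (sub_eq_zero.mp (Polynomial.C_eq_zero.mp h))
    exact AdjoinRoot.mk_ne_zero_of_natDegree_lt hmonic hC
      (by rw [Polynomial.natDegree_C, hgdeg]; omega) h1
  -- constants
  set e : A := (b : A) ^ 2 * (p : A) with hedef
  set κ : A := 2 * α - (t : A) with hκdef
  have hp2A : (p : A) ^ 2 = 0 := by
    have h1 : ((p ^ 2 : ℕ) : R) = 0 := by exact_mod_cast ZMod.natCast_self (p ^ 2)
    have h2 : ((p ^ 2 : ℕ) : A) = algebraMap R A ((p ^ 2 : ℕ) : R) := (map_natCast _ _).symm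
    rw [h1, map_zero] at h2
    push_cast at h2
    exact h2
  have he2 : e ^ 2 = 0 := by rw [hedef]; linear_combination (b : A) ^ 4 * hp2A
  have hpe : (p : A) * e = 0 := by rw [hedef]; linear_combination (b : A) ^ 2 * hp2A
  have hte : (t : A) ^ 2 + 4 = e := by
    rw [hedef]
    exact_mod_cast congrArg (fun z : ℤ => (z : A)) hpt
  have hκ2 : κ ^ 2 = e := by rw [hκdef]; linear_combination 4 * hrel + hte
  set N : ℕ := p * (p - 1) with hNdef
  have hN4p : N = 4 * p * K := by
    have h1 : p - 1 = 4 * K := by omega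
    rw [hNdef, h1]; ring
  have h2α : (t : A) + κ = 2 * α := by rw [hκdef]; ring
  have hs1 : ((2 : A) * α) ^ p = (t : A) ^ p + (p : A) * ((t : A) ^ (p - 1) * κ) := by
    rw [← h2α]; exact aux_pow_prime_expand hp hp5 _ _ _ hκ2 he2 hpe
  have ht2 : (t : A) ^ 2 = e - 4 := by linear_combination hte
  have ht4 : (t : A) ^ 4 = 16 + -(8 * e) := by
    have h1 : (t : A) ^ 4 = ((t : A) ^ 2) ^ 2 := by ring
    rw [h1, ht2]; linear_combination he2
  have hm8e : (-(8 * e)) ^ 2 = (0 : A) := by linear_combination 64 * he2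
  have ht4p : (t : A) ^ (4 * p) = (2 : A) ^ (4 * p) := by
    have h1 : (t : A) ^ (4 * p) = ((t : A) ^ 4) ^ p := by rw [← pow_mul]
    have h2 : ((2 : A)) ^ (4 * p) = ((2 : A) ^ 4) ^ p := by rw [← pow_mul]
    rw [h1, h2, ht4,
      aux_pow_prime_expand hp hp5 (16 : A) (-(8 * e)) 0 hm8e (by ring) (by ring)]
    have h3 : (p : A) * ((16 : A) ^ (p - 1) * -(8 * e)) = 0 := by
      linear_combination (-(8 : A) * (16 : A) ^ (p - 1)) * hpe
    rw [h3, add_zero]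
    norm_num
  have hx1sq : ((p : A) * ((t : A) ^ (p - 1) * κ)) ^ 2 = 0 := by
    linear_combination ((t : A) ^ (p - 1) * κ) ^ 2 * hp2A
  have hs2 : ((2 : A) * α) ^ (4 * p)
      = (2 : A) ^ (4 * p) + (4 : A) * (p : A) * ((t : A) ^ (4 * p - 1) * κ) := by
    have h1 : ((2 : A) * α) ^ (4 * p) = (((2 : A) * α) ^ p) ^ 4 := by
      rw [← pow_mul, mul_comm 4 p]
    rw [h1, hs1]
    have h2 := aux_pow_succ_sq_zero ((t : A) ^ p) ((p : A) * ((t : A) ^ (p - 1) * κ)) hx1sq 3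
    norm_num at h2
    rw [h2]
    have h3 : ((t : A) ^ p) ^ 4 = (2 : A) ^ (4 * p) := by
      rw [← pow_mul, mul_comm p 4]; exact ht4p
    have h4 : ((t : A) ^ p) ^ 3 * ((t : A) ^ (p - 1)) = (t : A) ^ (4 * p - 1) := by
      rw [← pow_mul, ← pow_add]; congr 1; omega
    rw [h3]
    linear_combination (4 * (p : A) * κ) * h4
  set w : A := (K : A) * (2 : A) ^ (4 * p * (K - 1)) * 4 * (t : A) ^ (4 * p - 1) with hwdef
  have hg2sq : ((4 : A) * (p : A) * ((t : A) ^ (4 * p - 1) * κ)) ^ 2 = 0 := by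
    linear_combination (16 * ((t : A) ^ (4 * p - 1) * κ) ^ 2) * hp2A
  have hs3 : ((2 : A) * α) ^ N = (2 : A) ^ N + (p : A) * (κ * w) := by
    have h1 : ((2 : A) * α) ^ N = (((2 : A) * α) ^ (4 * p)) ^ K := by
      rw [← pow_mul, ← hN4p]
    rw [h1, hs2]
    have h2 := aux_pow_succ_sq_zero ((2 : A) ^ (4 * p))
      ((4 : A) * (p : A) * ((t : A) ^ (4 * p - 1) * κ)) hg2sq (K - 1)
    rw [show K - 1 + 1 = K by omega] at h2
    rw [h2, hwdef]
    have h3 : ((2 : A) ^ (4 * p)) ^ K = (2 : A) ^ N := by rw [← pow_mul, ← hN4p]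
    have h4 : ((2 : A) ^ (4 * p)) ^ (K - 1) = (2 : A) ^ (4 * p * (K - 1)) := by
      rw [← pow_mul]
    have h5 : ((K - 1 : ℕ) : A) = (K : A) - 1 := by
      push_cast [Nat.cast_sub hK1]; ring
    rw [h3, h4, h5]
    ring
  -- 2 is a unit
  have hu2 : IsUnit (2 : A) := by
    have hcop : Nat.Coprime 2 (p ^ 2) :=
      Nat.Coprime.pow_right _ ((Nat.coprime_primes Nat.prime_two hp).mpr (by omega))
    have h1 : IsUnit (2 : R) := by
      have h2 := (ZMod.isUnit_iff_coprime 2 (p ^ 2)).mpr hcop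
      exact_mod_cast h2
    have h3 := h1.map (algebraMap R A)
    rwa [map_ofNat] at h3
  obtain ⟨u2, hu2val⟩ := hu2
  set z : A := w * ((u2⁻¹ : Aˣ) : A) ^ N with hzdef
  have hinv2N : (2 : A) ^ N * ((u2⁻¹ : Aˣ) : A) ^ N = 1 := by
    rw [← mul_pow, ← hu2val, Units.mul_inv, one_pow]
  have hαN : α ^ N = 1 + (p : A) * (κ * z) := by
    have hcan : (2 : A) ^ N * α ^ N = (2 : A) ^ N * (1 + (p : A) * (κ * z)) := by
      rw [← mul_pow, hs3, hzdef]
      linear_combination (-((p : A) * (κ * w))) * hinv2N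
    exact (IsUnit.pow N ⟨u2, hu2val⟩).mul_left_cancel hcan
  -- the conjugation σ
  have hσroot : g.eval₂ (algebraMap R A) ((t : A) - α) = 0 := by
    simp only [hgdef, eval₂_sub, eval₂_mul, eval₂_pow, eval₂_X, eval₂_C, eval₂_one]
    rw [map_intCast, map_one]
    linear_combination hrel
  set σ : A →+* A := AdjoinRoot.lift (algebraMap R A) ((t : A) - α) hσroot with hσdef
  have hσα : σ α = (t : A) - α := by
    rw [hσdef]; exact AdjoinRoot.lift_root hσroot
  have hσalg : ∀ r : R, σ (algebraMap R A r) = algebraMap R A r := by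
    intro r
    rw [hσdef]
    exact AdjoinRoot.lift_of hσroot
  have hσκ : σ κ = -κ := by
    rw [hκdef, map_sub, map_mul, hσα, map_intCast, map_ofNat]; ring
  -- units
  have hainv : α * (α - (t : A)) = 1 := by linear_combination hrel
  have hainv' : (α - (t : A)) * α = 1 := by linear_combination hrel
  set ua : Aˣ := ⟨α, α - (t : A), hainv, hainv'⟩ with huadef
  have hbinv : ((t : A) - α) * (-α) = 1 := by linear_combination hrel
  have hbinv' : (-α) * ((t : A) - α) = 1 := by linear_combination hrel
  set ub : Aˣ := ⟨(t : A) - α, -α, hbinv, hbinv'⟩ with hubdef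
  have hval_a : ∀ k : ℤ, ((ua ^ (k + 1) : Aˣ) : A) = ((ua ^ k : Aˣ) : A) * α := by
    intro k; rw [zpow_add_one, Units.val_mul]
  have hval_b : ∀ k : ℤ, ((ub ^ (k + 1) : Aˣ) : A) = ((ub ^ k : Aˣ) : A) * ((t : A) - α) := by
    intro k; rw [zpow_add_one, Units.val_mul]
  have hβrel : ((t : A) - α) ^ 2 = (t : A) * ((t : A) - α) + 1 := by linear_combination hrel
  -- the sequence identities
  have hstep2 : ∀ k : ℤ,
      ((ua ^ (k + 2) : Aˣ) : A) + ((ub ^ (k + 2) : Aˣ) : A)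
      = (t : A) * (((ua ^ (k + 1) : Aˣ) : A) + ((ub ^ (k + 1) : Aˣ) : A))
        + (((ua ^ k : Aˣ) : A) + ((ub ^ k : Aˣ) : A)) := by
    intro k
    have e1 : ((ua ^ (k + 2) : Aˣ) : A) = ((ua ^ k : Aˣ) : A) * α ^ 2 := by
      rw [show k + 2 = k + 1 + 1 by ring, hval_a, hval_a]; ring
    have e2 : ((ub ^ (k + 2) : Aˣ) : A) = ((ub ^ k : Aˣ) : A) * ((t : A) - α) ^ 2 := by
      rw [show k + 2 = k + 1 + 1 by ring, hval_b, hval_b]; ring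
    rw [e1, e2, hval_a k, hval_b k, hrel, hβrel]
    ring
  have hcast2 : ∀ k : ℤ, algebraMap R A ((L (k + 2) : ℤ) : R)
      = (t : A) * algebraMap R A ((L (k + 1) : ℤ) : R) + algebraMap R A ((L k : ℤ) : R) := by
    intro k
    have h1 : ((L (k + 2) : ℤ) : R) = (t : ℤ) * ((L (k + 1) : ℤ) : R) + ((L k : ℤ) : R) := by
      rw [hL k, Int.cast_add, Int.cast_mul]
    rw [h1, map_add, map_mul, map_intCast]
  have key : ∀ k : ℤ, algebraMap R A ((L k : ℤ) : R)
      = ((ua ^ k : Aˣ) : A) + ((ub ^ k : Aˣ) : A) := by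
    have hEq0 : algebraMap R A ((L 0 : ℤ) : R) = ((ua ^ (0 : ℤ) : Aˣ) : A) + ((ub ^ (0 : ℤ) : Aˣ) : A) := by
      have h6 : ((L 0 : ℤ) : R) = 2 := by rw [hL0]; push_cast; ring
      rw [h6, map_ofNat, zpow_zero, zpow_zero, Units.val_one]
      norm_num
    have hEq1 : algebraMap R A ((L 1 : ℤ) : R) = ((ua ^ (1 : ℤ) : Aˣ) : A) + ((ub ^ (1 : ℤ) : Aˣ) : A) := by
      rw [hL1, zpow_one, zpow_one]
      rw [map_intCast]
      show (t : A) = α + ((t : A) - α)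
      ring
    have hstepEq : ∀ k : ℤ,
        algebraMap R A ((L k : ℤ) : R) = ((ua ^ k : Aˣ) : A) + ((ub ^ k : Aˣ) : A) →
        algebraMap R A ((L (k + 1) : ℤ) : R) = ((ua ^ (k + 1) : Aˣ) : A) + ((ub ^ (k + 1) : Aˣ) : A) →
        algebraMap R A ((L (k + 2) : ℤ) : R) = ((ua ^ (k + 2) : Aˣ) : A) + ((ub ^ (k + 2) : Aˣ) : A) := by
      intro k h0 h1
      rw [hcast2 k, hstep2 k, h0, h1]
    have hbackEq : ∀ k : ℤ,
        algebraMap R A ((L (k + 1) : ℤ) : R) = ((ua ^ (k + 1) : Aˣ) : A) + ((ub ^ (k + 1) : Aˣ) : A) →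
        algebraMap R A ((L (k + 2) : ℤ) : R) = ((ua ^ (k + 2) : Aˣ) : A) + ((ub ^ (k + 2) : Aˣ) : A) →
        algebraMap R A ((L k : ℤ) : R) = ((ua ^ k : Aˣ) : A) + ((ub ^ k : Aˣ) : A) := by
      intro k h1 h2
      have h3 := hcast2 k
      have h4 := hstep2 k
      rw [h1, h2] at h3
      linear_combination h4 - h3
    have hpair : ∀ k : ℤ, (algebraMap R A ((L k : ℤ) : R) = ((ua ^ k : Aˣ) : A) + ((ub ^ k : Aˣ) : A))
        ∧ (algebraMap R A ((L (k + 1) : ℤ) : R) = ((ua ^ (k + 1) : Aˣ) : A) + ((ub ^ (k + 1) : Aˣ) : A)) := by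
      intro k
      induction k using Int.induction_on with
      | zero => exact ⟨hEq0, hEq1⟩
      | succ i ih =>
        refine ⟨ih.2, ?_⟩
        have h5 := hstepEq i ih.1 ih.2
        rw [show (i : ℤ) + 1 + 1 = (i : ℤ) + 2 by ring]
        exact h5
      | pred i ih =>
        refine ⟨?_, by rw [show -(i : ℤ) - 1 + 1 = -(i : ℤ) by ring]; exact ih.1⟩
        have h5 := hbackEq (-(i : ℤ) - 1)
        rw [show -(i : ℤ) - 1 + 1 = -(i : ℤ) by ring, show -(i : ℤ) - 1 + 2 = -(i : ℤ) + 1 by ring] at h5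
        exact h5 ih.1 ih.2
    exact fun k => (hpair k).1
  -- conclusion
  intro m n hmn
  have hNcast : ((N : ℕ) : ℤ) = (p : ℤ) * ((p : ℤ) - 1) := by
    rw [hNdef]
    push_cast [Nat.cast_sub hp.one_le]
    ring
  obtain ⟨q, hq⟩ : ∃ q : ℤ, m = n + (N : ℤ) * q := by
    have hd := Int.ModEq.dvd hmn
    rw [← hNcast] at hd
    obtain ⟨q', hq'⟩ := hd
    exact ⟨-q', by linarith⟩
  have hxa2 : ((p : A) * (κ * z)) ^ 2 = 0 := by
    linear_combination (κ * z) ^ 2 * hp2A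
  have hvalaN : ((ua ^ (N : ℤ) : Aˣ) : A) = 1 + (p : A) * (κ * z) := by
    rw [zpow_natCast, Units.val_pow_eq_pow_val]
    exact hαN
  have hqa := aux_unit_zpow_sq_zero (ua ^ (N : ℤ)) _ hxa2 hvalaN q
  have hmapua : Units.map (σ : A →+* A).toMonoidHom ua = ub := by
    apply Units.ext
    rw [Units.coe_map]
    exact hσα
  have hσua : ∀ k : ℤ, σ ((ua ^ k : Aˣ) : A) = ((ub ^ k : Aˣ) : A) := by
    intro k
    have h1 : Units.map (σ : A →+* A).toMonoidHom (ua ^ k) = ub ^ k := by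
      rw [map_zpow, hmapua]
    have h2 := congrArg (Units.val) h1
    rwa [Units.coe_map] at h2
  have hvalbN : ((ub ^ (N : ℤ) : Aˣ) : A) = 1 + (-((p : A) * (κ * σ z))) := by
    rw [← hσua (N : ℤ), hvalaN, map_add, map_one, map_mul, map_natCast, map_mul, hσκ]
    ring
  have hxb2 : (-((p : A) * (κ * σ z))) ^ 2 = 0 := by
    linear_combination (κ * σ z) ^ 2 * hp2A
  have hqb := aux_unit_zpow_sq_zero (ub ^ (N : ℤ)) _ hxb2 hvalbN q
  have hV : ∀ v : A, ∃ y : A, v - σ v = κ * y := by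
    intro v
    have hv : v ∈ Algebra.adjoin R ({AdjoinRoot.root g} : Set A) := by
      rw [AdjoinRoot.adjoinRoot_eq_top]; trivial
    refine Algebra.adjoin_induction (p := fun v _ => ∃ y : A, v - σ v = κ * y) ?_ ?_ ?_ ?_ hv
    · intro x hx
      rw [Set.mem_singleton_iff] at hx
      subst hx
      exact ⟨1, by rw [show σ (AdjoinRoot.root g) = σ α from rfl, hσα, hκdef]; ring⟩
    · intro r
      exact ⟨0, by rw [hσalg r]; ring⟩
    · rintro x y _ _ ⟨y1, h1⟩ ⟨y2, h2⟩
      exact ⟨y1 + y2, by rw [map_add]; linear_combination h1 + h2⟩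
    · rintro x y _ _ ⟨y1, h1⟩ ⟨y2, h2⟩
      exact ⟨x * y2 + σ y * y1, by rw [map_mul]; linear_combination x * h2 + σ y * h1⟩
  have hMa : ((ua ^ m : Aˣ) : A)
      = ((ua ^ n : Aˣ) : A) * (1 + (q : A) * ((p : A) * (κ * z))) := by
    rw [hq, zpow_add, Units.val_mul, zpow_mul, hqa]
  have hMb : ((ub ^ m : Aˣ) : A)
      = ((ub ^ n : Aˣ) : A) * (1 + (q : A) * (-((p : A) * (κ * σ z)))) := by
    rw [hq, zpow_add, Units.val_mul, zpow_mul, hqb]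
  obtain ⟨y, hy⟩ := hV (((ua ^ n : Aˣ) : A) * z)
  have hσanz : σ (((ua ^ n : Aˣ) : A) * z) = ((ub ^ n : Aˣ) : A) * σ z := by
    rw [map_mul, hσua]
  rw [hσanz] at hy
  have hFmn : ((ua ^ m : Aˣ) : A) + ((ub ^ m : Aˣ) : A)
      = ((ua ^ n : Aˣ) : A) + ((ub ^ n : Aˣ) : A) := by
    rw [hMa, hMb]
    linear_combination ((q : A) * (p : A) * κ) * hy + ((q : A) * (p : A) * y) * hκ2
      + ((q : A) * y) * hpe
  have hfin : ((L m : ℤ) : R) = ((L n : ℤ) : R) := by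
    apply hinj
    rw [key m, key n]
    exact hFmn
  have h9 : L m ≡ L n [ZMOD ((p ^ 2 : ℕ) : ℤ)] :=
    (ZMod.intCast_eq_intCast_iff (L m) (L n) (p ^ 2)).mp hfin
  have h10 : (((p ^ 2 : ℕ) : ℤ)) = (p : ℤ) ^ 2 := by push_cast; ring
  rwa [h10] at h9
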